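/- arXiv:1604.01164 — 2 statements merged into one kernel-verified Lean document; each statement's English description precedes it below -/
import Mathlib

section
/- Every maximal chain of the poset P_M induced by an n-maniplex M (with minimum F_{-1} and maximum F_n adjoined) contains exactly one face of each rank in {−1, 0, 1, ..., n}; in particular every maximal chain has n+2 elements. -/
/-- An `n`-maniplex on vertex (flag) set `V`: a nonempty, connected, properly
`n`-edge-coloured simple `n`-regular graph (encoded by the fixed-point-free
involutions `σ i` giving the unique `i`-neighbour of each vertex) such that the
2-factors of colours `i`, `j` with `|i - j| > 1` are 4-cycles. -/
structure Maniplex (n : ℕ) (V : Type) where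
  nonempty : Nonempty V
  σ : Fin n → V → V
  invol : ∀ i v, σ i (σ i v) = v
  nofix : ∀ i v, σ i v ≠ v
  conn : ∀ u v : V, Relation.ReflTransGen (fun x y => ∃ i, σ i x = y) u v
  comm : ∀ i j : Fin n, (i : ℕ) + 1 < (j : ℕ) → ∀ v,
    σ i (σ j v) = σ j (σ i v) ∧ σ i v ≠ σ j v

namespace Maniplex

variable {n : ℕ} {V : Type}

/-- There is a path from `u` to `v` using only edges with colours in `A`. -/
def ReachIn (M : Maniplex n V) (A : Set (Fin n)) (u v : V) : Prop :=
  Relation.ReflTransGen (fun x y => ∃ i ∈ A, M.σ i x = y) u v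

/-- The `i`-face of `M` containing `v`: the connected component of `v` in the
spanning subgraph with all edges of colour `i` deleted. -/
def face (M : Maniplex n V) (i : Fin n) (v : V) : Set V :=
  {u | M.ReachIn {j | j ≠ i} v u}

/-- `S` is an `i`-face of `M`. -/
def IsFace (M : Maniplex n V) (i : Fin n) (S : Set V) : Prop :=
  ∃ v, S = M.face i v

end Maniplex
namespace Maniplex

variable {n : ℕ} {V : Type}

/-- The type of (proper) faces of a maniplex: a rank together with a face of that rank. -/
def FaceT (M : Maniplex n V) : Type := {F : Fin n × Set V // M.IsFace F.1 F.2}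

/-- The order on faces: `F ≤ G` iff `rank F ≤ rank G` and `F ∩ G ≠ ∅`. -/
def faceLe (M : Maniplex n V) (F G : M.FaceT) : Prop :=
  F.1.1 ≤ G.1.1 ∧ (F.1.2 ∩ G.1.2).Nonempty

/-- The faces of `M` together with adjoined minimum `none` and maximum `some none`. -/
def PFace (M : Maniplex n V) : Type := Option (Option M.FaceT)

/-- The order on `P_M` (with the improper minimum and maximum adjoined). -/
def ple (M : Maniplex n V) : M.PFace → M.PFace → Prop
  | none, _ => True
  | _, some none => True
  | some (some F), some (some G) => M.faceLe F G
  | _, _ => False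

/-- The rank function of `P_M`. -/
def prank (M : Maniplex n V) : M.PFace → ℤ
  | none => -1
  | some none => (n : ℤ)
  | some (some F) => ((F.1.1 : ℕ) : ℤ)

/-- The component intersection property: for every chain of faces, the
intersection of the faces is a connected subgraph of `M`. -/
def CIP (M : Maniplex n V) : Prop :=
  ∀ (k : ℕ) (r : Fin k → Fin n) (S : Fin k → Set V),
    (∀ a, M.IsFace (r a) (S a)) →
    (∀ a b, (S a ∩ S b).Nonempty) →
    ∀ u v : V, (∀ a, u ∈ S a) → (∀ a, v ∈ S a) →
      M.ReachIn {c | ∀ a, c ≠ r a} u v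

/-- The diamond condition for the poset `P_M`. -/
def Diamond (M : Maniplex n V) : Prop :=
  ∀ (i : Fin n) (E F : M.PFace), M.ple E F →
    M.prank E = ((i : ℕ) : ℤ) - 1 → M.prank F = ((i : ℕ) : ℤ) + 1 →
    ∃ H₁ H₂ : M.PFace, H₁ ≠ H₂ ∧
      ∀ H : M.PFace,
        (M.prank H = ((i : ℕ) : ℤ) ∧ M.ple E H ∧ M.ple H F) ↔ (H = H₁ ∨ H = H₂)

/-- A maximal chain of proper faces of `P_M`: one face of each rank,
pairwise incident. -/
def IsFlag (M : Maniplex n V) (S : Fin n → Set V) : Prop :=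
  (∀ i, M.IsFace i (S i)) ∧ ∀ i j, ((S i) ∩ (S j)).Nonempty

/-- `P_M` is faithful: every maximal chain of proper faces has a unique common vertex. -/
def Faithful (M : Maniplex n V) : Prop :=
  ∀ S : Fin n → Set V, M.IsFlag S → ∃! v : V, ∀ i, v ∈ S i

/-- Strong flag connectivity of `P_M`: any two maximal chains `Φ`, `Ψ` are joined
by a sequence of successively adjacent maximal chains all containing `Φ ∩ Ψ`. -/
def SFC (M : Maniplex n V) : Prop :=
  ∀ Φ Ψ : Fin n → Set V, M.IsFlag Φ → M.IsFlag Ψ →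
    Relation.ReflTransGen
      (fun X Y => M.IsFlag Y ∧ (∃ j, X j ≠ Y j ∧ ∀ l, l ≠ j → X l = Y l) ∧
        ∀ i, Φ i = Ψ i → Y i = Φ i) Φ Ψ

/-- The strong path intersection property. -/
def SPIP (M : Maniplex n V) : Prop :=
  ∀ (A B : Set (Fin n)) (u v : V),
    M.ReachIn A u v → M.ReachIn B u v → M.ReachIn (A ∩ B) u v

/-- The weak path intersection property. -/
def WPIP (M : Maniplex n V) : Prop :=
  ∀ i j : Fin n, i < j → ∀ u v : V,
    M.ReachIn {c | i < c} u v → M.ReachIn {c | c < j} u v →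
    M.ReachIn {c | i < c ∧ c < j} u v

end Maniplex
namespace Maniplex

variable {n : ℕ} {V : Type}

lemma reach_symm (M : Maniplex n V) (A : Set (Fin n)) {u v : V}
    (h : M.ReachIn A u v) : M.ReachIn A v u := by
  have hs : Symmetric (fun x y : V => ∃ i ∈ A, M.σ i x = y) := by
    rintro x y ⟨i, hi, rfl⟩
    exact ⟨i, hi, M.invol i x⟩
  haveI : Std.Symm (fun x y : V => ∃ i ∈ A, M.σ i x = y) := ⟨fun a b hab => hs hab⟩
  exact Relation.ReflTransGen.symmetric.symm _ _ h

lemma reach_mono (M : Maniplex n V) {A B : Set (Fin n)} (hAB : A ⊆ B) {u v : V}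
    (h : M.ReachIn A u v) : M.ReachIn B u v :=
  Relation.ReflTransGen.mono (p := fun x y => ∃ i ∈ B, M.σ i x = y)
    (fun x y ⟨i, hi, e⟩ => ⟨i, hAB hi, e⟩) u v h

lemma reach_conj (M : Maniplex n V) {k b : Fin n} (hb : k < b) {x y : V}
    (h : M.ReachIn {c | c < k} x y) :
    M.ReachIn {c | c < k} (M.σ b x) (M.σ b y) := by
  induction h with
  | refl => exact Relation.ReflTransGen.refl
  | @tail y' z h1 h2 ih =>
    obtain ⟨a, ha, rfl⟩ := h2
    refine ih.tail ⟨a, ha, ?_⟩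
    have hab : (a : ℕ) + 1 < (b : ℕ) := by
      have h1' := Fin.lt_def.mp (ha : a < k)
      have h2' := Fin.lt_def.mp hb
      omega
    exact (M.comm a b hab y').1

lemma reach_sort (M : Maniplex n V) (k : Fin n) {u w : V}
    (h : M.ReachIn {c | c ≠ k} u w) :
    ∃ x, M.ReachIn {c | k < c} u x ∧ M.ReachIn {c | c < k} x w := by
  induction h with
  | refl => exact ⟨u, Relation.ReflTransGen.refl, Relation.ReflTransGen.refl⟩
  | @tail y' z h1 h2 ih =>
    obtain ⟨x, hx1, hx2⟩ := ih
    obtain ⟨c, hc, rfl⟩ := h2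
    rcases lt_or_gt_of_ne (hc : c ≠ k) with h | h
    · exact ⟨x, hx1, hx2.tail ⟨c, h, rfl⟩⟩
    · exact ⟨M.σ c x, hx1.tail ⟨c, h, rfl⟩, M.reach_conj h hx2⟩

lemma mem_face_self (M : Maniplex n V) (i : Fin n) (v : V) : v ∈ M.face i v :=
  Relation.ReflTransGen.refl

lemma face_eq_of_mem (M : Maniplex n V) {i : Fin n} {u v : V} (h : u ∈ M.face i v) :
    M.face i u = M.face i v := by
  ext w
  constructor
  · intro hw
    exact Relation.ReflTransGen.trans (h : M.ReachIn _ v u) hw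
  · intro hw
    exact Relation.ReflTransGen.trans (M.reach_symm _ h) hw

lemma face_eq_of_inter (M : Maniplex n V) {i : Fin n} {u v : V}
    (h : (M.face i u ∩ M.face i v).Nonempty) : M.face i u = M.face i v := by
  obtain ⟨w, h1, h2⟩ := h
  rw [← M.face_eq_of_mem h1, ← M.face_eq_of_mem h2]

lemma faceLe_refl (M : Maniplex n V) (F : M.FaceT) : M.faceLe F F := by
  obtain ⟨v, hv⟩ := F.2
  exact ⟨le_rfl, v, by rw [hv]; exact M.mem_face_self _ _,
    by rw [hv]; exact M.mem_face_self _ _⟩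

lemma faceT_eq_of_rank (M : Maniplex n V) {F G : M.FaceT}
    (h : M.faceLe F G) (hr : F.1.1 = G.1.1) : F = G := by
  obtain ⟨f, hf⟩ := F.2
  obtain ⟨g, hg⟩ := G.2
  obtain ⟨_, hne⟩ := h
  have h2 : F.1.2 = G.1.2 := by
    rw [hf, hg, hr] at hne ⊢
    exact M.face_eq_of_inter hne
  exact Subtype.ext (Prod.ext_iff.mpr ⟨hr, h2⟩)

lemma faceLe_trans (M : Maniplex n V) {F G H : M.FaceT}
    (h1 : M.faceLe F G) (h2 : M.faceLe G H) : M.faceLe F H := by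
  obtain ⟨hjk, u, huF, huG⟩ := h1
  obtain ⟨hkl, w, hwG, hwH⟩ := h2
  refine ⟨hjk.trans hkl, ?_⟩
  obtain ⟨g, hg⟩ := G.2
  rw [hg] at huG hwG
  have huw : M.ReachIn {c | c ≠ G.1.1} u w :=
    Relation.ReflTransGen.trans (M.reach_symm _ huG) hwG
  obtain ⟨x, hx1, hx2⟩ := M.reach_sort G.1.1 huw
  obtain ⟨f, hf⟩ := F.2
  obtain ⟨e, he⟩ := H.2
  rw [hf] at huF
  rw [he] at hwH
  have hxF : x ∈ F.1.2 := by
    rw [hf]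
    refine Relation.ReflTransGen.trans huF (M.reach_mono ?_ hx1)
    intro c hc
    exact (lt_of_le_of_lt hjk (hc : G.1.1 < c)).ne'
  have hxH : x ∈ H.1.2 := by
    rw [he]
    refine Relation.ReflTransGen.trans hwH (M.reach_mono ?_ (M.reach_symm _ hx2))
    intro c hc
    exact (lt_of_lt_of_le (hc : c < G.1.1) hkl).ne
  exact ⟨x, hxF, hxH⟩

lemma ple_trans (M : Maniplex n V) {E F G : M.PFace}
    (h1 : M.ple E F) (h2 : M.ple F G) : M.ple E G := by
  rcases E with _ | (_ | a) <;> rcases F with _ | (_ | b) <;> rcases G with _ | (_ | c) <;>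
    first
      | trivial
      | exact False.elim h1
      | exact False.elim h2
      | exact M.faceLe_trans h1 h2

lemma pface_some_inj {M : Maniplex n V} {F G : M.FaceT}
    (h : (some (some F) : M.PFace) = some (some G)) : F = G :=
  Option.some_injective _ (Option.some_injective _ h)

lemma chain_proper_eq (M : Maniplex n V) {C : Set M.PFace} (hC : IsChain M.ple C)
    {F G : M.FaceT} (hF : some (some F) ∈ C) (hG : some (some G) ∈ C)
    (hr : F.1.1 = G.1.1) : F = G := by
  by_cases h : F = G
  · exact h
  · have hne : (some (some F) : M.PFace) ≠ some (some G) := fun he => h (pface_some_inj he)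
    rcases hC hF hG hne with hle | hle
    · exact M.faceT_eq_of_rank hle hr
    · exact (M.faceT_eq_of_rank hle hr.symm).symm

lemma ple_bot (M : Maniplex n V) (b : M.PFace) : M.ple none b := by
  rcases b with _ | (_ | g) <;> trivial

lemma ple_top (M : Maniplex n V) (b : M.PFace) : M.ple b (some none) := by
  rcases b with _ | (_ | g) <;> trivial

lemma bot_mem (M : Maniplex n V) {C : Set M.PFace} (hC : IsMaxChain M.ple C) :
    (none : M.PFace) ∈ C := by
  have h := hC.2 (hC.1.insert (a := none) (fun b _ _ => Or.inl (M.ple_bot b))) (Set.subset_insert _ _)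
  rw [h]; exact Set.mem_insert _ _

lemma top_mem (M : Maniplex n V) {C : Set M.PFace} (hC : IsMaxChain M.ple C) :
    (some none : M.PFace) ∈ C := by
  have h := hC.2 (hC.1.insert (a := some none) (fun b _ _ => Or.inr (M.ple_top b))) (Set.subset_insert _ _)
  rw [h]; exact Set.mem_insert _ _

lemma prank_injOn (M : Maniplex n V) {C : Set M.PFace} (hC : IsChain M.ple C) :
    Set.InjOn M.prank C := by
  intro x hx y hy hxy
  rcases x with _ | (_ | F) <;> rcases y with _ | (_ | G)
  · rfl
  · have h : (-1 : ℤ) = (n : ℤ) := hxy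
    omega
  · have h : (-1 : ℤ) = ((G.1.1 : ℕ) : ℤ) := hxy
    omega
  · have h : ((n : ℕ) : ℤ) = (-1 : ℤ) := hxy
    omega
  · rfl
  · have h : ((n : ℕ) : ℤ) = ((G.1.1 : ℕ) : ℤ) := hxy
    have h2 := G.1.1.isLt
    omega
  · have h : ((F.1.1 : ℕ) : ℤ) = (-1 : ℤ) := hxy
    omega
  · have h : ((F.1.1 : ℕ) : ℤ) = ((n : ℕ) : ℤ) := hxy
    have h2 := F.1.1.isLt
    omega
  · have h : ((F.1.1 : ℕ) : ℤ) = ((G.1.1 : ℕ) : ℤ) := hxy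
    have hr : F.1.1 = G.1.1 := Fin.ext (by exact_mod_cast h)
    exact congrArg (fun z => some (some z)) (M.chain_proper_eq hC hx hy hr)

lemma exists_mid (M : Maniplex n V) {C : Set M.PFace} (hC : IsMaxChain M.ple C)
    (i : Fin n) : ∃ F : M.FaceT, some (some F) ∈ C ∧ F.1.1 = i := by
  by_contra hcon
  push_neg at hcon
  classical
  set B : Set M.FaceT := {F | some (some F) ∈ C ∧ F.1.1 < i} with hBdef
  set A : Set M.FaceT := {F | some (some F) ∈ C ∧ i < F.1.1} with hAdef
  have hABmem : ∀ F : M.FaceT, some (some F) ∈ C → F ∈ B ∨ F ∈ A := by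
    intro F hF
    rcases lt_or_gt_of_ne (hcon F hF) with h | h
    · exact Or.inl ⟨hF, h⟩
    · exact Or.inr ⟨hF, h⟩
  have hBfin : B.Finite := by
    apply Set.Finite.of_finite_image (f := fun F : M.FaceT => F.1.1) (Set.toFinite _)
    intro F hF G hG he
    exact M.chain_proper_eq hC.1 hF.1 hG.1 he
  have hAfin : A.Finite := by
    apply Set.Finite.of_finite_image (f := fun F : M.FaceT => F.1.1) (Set.toFinite _)
    intro F hF G hG he
    exact M.chain_proper_eq hC.1 hF.1 hG.1 he
  have main : ∃ v : V, (∀ F ∈ B, M.faceLe F ⟨(i, M.face i v), v, rfl⟩) ∧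
      (∀ F ∈ A, M.faceLe ⟨(i, M.face i v), v, rfl⟩ F) := by
    rcases B.eq_empty_or_nonempty with hBe | hBne
    · rcases A.eq_empty_or_nonempty with hAe | hAne
      · obtain ⟨v⟩ := M.nonempty
        exact ⟨v, by simp [hBe], by simp [hAe]⟩
      · obtain ⟨G₀, hG₀, hGmin⟩ :=
          Set.Finite.exists_minimalFor (fun F : M.FaceT => F.1.1) A hAfin hAne
        obtain ⟨g₀, hg₀⟩ := G₀.2
        refine ⟨g₀, by simp [hBe], ?_⟩
        intro F hF
        have h0 : M.faceLe ⟨(i, M.face i g₀), g₀, rfl⟩ G₀ :=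
          ⟨le_of_lt hG₀.2, g₀, M.mem_face_self i g₀, by rw [hg₀]; exact M.mem_face_self _ _⟩
        by_cases he : F = G₀
        · rw [he]; exact h0
        · have hne : (some (some G₀) : M.PFace) ≠ some (some F) :=
            fun heq => he (pface_some_inj heq).symm
          rcases hC.1 hG₀.1 hF.1 hne with hle | hle
          · exact M.faceLe_trans h0 hle
          · exact absurd (M.faceT_eq_of_rank hle (le_antisymm hle.1 (hGmin hF hle.1))).symm
              (fun x => he x.symm)
    · obtain ⟨F₀, hF₀, hFmax⟩ :=
        Set.Finite.exists_maximalFor (fun F : M.FaceT => F.1.1) B hBfin hBne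
      have hBle : ∀ v : V, v ∈ F₀.1.2 → ∀ F ∈ B,
          M.faceLe F ⟨(i, M.face i v), v, rfl⟩ := by
        intro v hv F hF
        have h0 : M.faceLe F₀ ⟨(i, M.face i v), v, rfl⟩ :=
          ⟨le_of_lt hF₀.2, v, hv, M.mem_face_self i v⟩
        by_cases he : F = F₀
        · rw [he]; exact h0
        · have hne : (some (some F) : M.PFace) ≠ some (some F₀) :=
            fun heq => he (pface_some_inj heq)
          rcases hC.1 hF.1 hF₀.1 hne with hle | hle
          · exact M.faceLe_trans hle h0
          · exact absurd (M.faceT_eq_of_rank hle (le_antisymm hle.1 (hFmax hF hle.1))).symm he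
      rcases A.eq_empty_or_nonempty with hAe | hAne
      · obtain ⟨f₀, hf₀⟩ := F₀.2
        have hv : f₀ ∈ F₀.1.2 := by rw [hf₀]; exact M.mem_face_self _ _
        exact ⟨f₀, hBle f₀ hv, by simp [hAe]⟩
      · obtain ⟨G₀, hG₀, hGmin⟩ :=
          Set.Finite.exists_minimalFor (fun F : M.FaceT => F.1.1) A hAfin hAne
        have hltFG : F₀.1.1 < G₀.1.1 := hF₀.2.trans hG₀.2
        have hne : (some (some F₀) : M.PFace) ≠ some (some G₀) := by
          intro heq
          exact absurd (pface_some_inj heq ▸ hltFG) (lt_irrefl _)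
        rcases hC.1 hF₀.1 hG₀.1 hne with hle | hle
        · obtain ⟨_, v, hv1, hv2⟩ := (hle : M.faceLe F₀ G₀)
          refine ⟨v, hBle v hv1, ?_⟩
          intro F hF
          have h0 : M.faceLe ⟨(i, M.face i v), v, rfl⟩ G₀ :=
            ⟨le_of_lt hG₀.2, v, M.mem_face_self i v, hv2⟩
          by_cases he : F = G₀
          · rw [he]; exact h0
          · have hne2 : (some (some G₀) : M.PFace) ≠ some (some F) :=
              fun heq => he (pface_some_inj heq).symm
            rcases hC.1 hG₀.1 hF.1 hne2 with hle2 | hle2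
            · exact M.faceLe_trans h0 hle2
            · exact absurd (M.faceT_eq_of_rank hle2 (le_antisymm hle2.1 (hGmin hF hle2.1))).symm
                (fun x => he x.symm)
        · exact absurd (hle : M.faceLe G₀ F₀).1 (not_le.mpr hltFG)
  obtain ⟨v, hvB, hvA⟩ := main
  set S : M.PFace := some (some ⟨(i, M.face i v), v, rfl⟩) with hS
  have hchain : IsChain M.ple (insert S C) := by
    apply hC.1.insert
    intro b hb _
    rcases b with _ | (_ | G)
    · exact Or.inr trivial
    · exact Or.inl trivial
    · rcases hABmem G hb with h | h
      · exact Or.inr (hvB G h)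
      · exact Or.inl (hvA G h)
  have hmem : S ∈ C := by
    have h := hC.2 hchain (Set.subset_insert _ _)
    rw [h]; exact Set.mem_insert _ _
  exact hcon ⟨(i, M.face i v), v, rfl⟩ hmem rfl

end Maniplex

/-- Every maximal chain of the poset `P_M` induced by an `n`-maniplex `M` (with
minimum and maximum adjoined) contains exactly one face of each rank in
`{-1, 0, ..., n}`; in particular it has `n + 2` elements. -/
theorem maxChain_has_all_ranks {n : ℕ} {V : Type} (M : Maniplex n V)
    (C : Set M.PFace) (hC : IsMaxChain M.ple C) :
    (∀ m : ℤ, -1 ≤ m → m ≤ (n : ℤ) → ∃! F, F ∈ C ∧ M.prank F = m) ∧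
      C.ncard = n + 2 := by
  have hinj : Set.InjOn M.prank C := M.prank_injOn hC.1
  have hex : ∀ m : ℤ, -1 ≤ m → m ≤ (n : ℤ) → ∃ F ∈ C, M.prank F = m := by
    intro m h1 h2
    rcases eq_or_lt_of_le h1 with he | h1'
    · exact ⟨none, M.bot_mem hC, he⟩
    · rcases eq_or_lt_of_le h2 with he | h2'
      · exact ⟨some none, M.top_mem hC, he.symm⟩
      · have h0 : 0 ≤ m := by omega
        have hmn : m.toNat < n := by omega
        obtain ⟨F, hF, hr⟩ := M.exists_mid hC ⟨m.toNat, hmn⟩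
        refine ⟨some (some F), hF, ?_⟩
        show ((F.1.1 : ℕ) : ℤ) = m
        rw [hr]
        simp
        omega
  constructor
  · intro m h1 h2
    obtain ⟨F, hF, hr⟩ := hex m h1 h2
    exact ⟨F, ⟨hF, hr⟩, fun G hG => hinj hG.1 hF (hG.2.trans hr.symm)⟩
  · have himg : M.prank '' C = Set.Icc (-1 : ℤ) (n : ℤ) := by
      apply Set.Subset.antisymm
      · rintro _ ⟨F, _, rfl⟩
        rw [Set.mem_Icc]
        rcases F with _ | (_ | F)
        · have h : M.prank none = -1 := rfl
          rw [h]; omega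
        · have h : M.prank (some none) = (n : ℤ) := rfl
          rw [h]; omega
        · have h : M.prank (some (some F)) = ((F.1.1 : ℕ) : ℤ) := rfl
          have h2 := F.1.1.isLt
          rw [h]; omega
      · rintro m hm
        rw [Set.mem_Icc] at hm
        obtain ⟨F, hF, hr⟩ := hex m hm.1 hm.2
        exact ⟨F, hF, hr⟩
    have hcard := Set.ncard_image_of_injOn hinj
    rw [himg] at hcard
    rw [← hcard, ← Finset.coe_Icc, Set.ncard_coe_finset, Int.card_Icc]
    omega
end

section
/- A maniplex M satisfies the component intersection property if and only if it satisfies the weak path intersection property. -/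
namespace Maniplex

variable {n : ℕ} {V : Type}

lemma reachIn_mono (M : Maniplex n V) {A B : Set (Fin n)} (h : A ⊆ B) {u v : V}
    (hr : M.ReachIn A u v) : M.ReachIn B u v :=
  Relation.ReflTransGen.mono (fun _ _ ⟨i, hi, hs⟩ => ⟨i, h hi, hs⟩) _ _ hr

lemma reachIn_symm (M : Maniplex n V) {A : Set (Fin n)} {u v : V}
    (h : M.ReachIn A u v) : M.ReachIn A v u :=
  @Std.Symm.symm _ _ (@Relation.ReflTransGen.stdSymm _ (fun x y => ∃ i ∈ A, M.σ i x = y)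
    ⟨fun x y ⟨i, hi, hs⟩ => ⟨i, hi, by rw [← hs, M.invol]⟩⟩) _ _ h

lemma reachIn_trans (M : Maniplex n V) {A : Set (Fin n)} {u v w : V}
    (h : M.ReachIn A u v) (h' : M.ReachIn A v w) : M.ReachIn A u w :=
  Relation.ReflTransGen.trans h h'

lemma reachIn_map (M : Maniplex n V) {A : Set (Fin n)} (c : Fin n)
    (hc : ∀ d ∈ A, ∀ x, M.σ c (M.σ d x) = M.σ d (M.σ c x)) {u v : V}
    (h : M.ReachIn A u v) : M.ReachIn A (M.σ c u) (M.σ c v) := by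
  induction h with
  | refl => exact Relation.ReflTransGen.refl
  | tail _ step ih =>
    obtain ⟨d, hd, hs⟩ := step
    exact ih.tail ⟨d, hd, by rw [← hs, hc d hd]⟩

lemma reachIn_split (M : Maniplex n V) (i : Fin n) {u v : V}
    (h : M.ReachIn {c | c ≠ i} u v) :
    ∃ w, M.ReachIn {c | c < i} u w ∧ M.ReachIn {c | i < c} w v := by
  induction h using Relation.ReflTransGen.head_induction_on with
  | refl => exact ⟨v, Relation.ReflTransGen.refl, Relation.ReflTransGen.refl⟩
  | head step tl ih =>
    rename_i a b
    obtain ⟨d, hd, hs⟩ := step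
    obtain ⟨w, hw1, hw2⟩ := ih
    rcases lt_or_gt_of_ne (hd : d ≠ i) with hdi | hdi
    · exact ⟨w, Relation.ReflTransGen.head ⟨d, hdi, hs⟩ hw1, hw2⟩
    · refine ⟨M.σ d w, ?_, ?_⟩
      · have hmap := M.reachIn_map d
          (fun e (he : e < i) x => ((M.comm e d (by
            have h1 : (e : ℕ) < (i : ℕ) := he
            have h2 : (i : ℕ) < (d : ℕ) := hdi
            omega) x).1).symm) hw1
        rw [← hs, M.invol] at hmap
        exact hmap
      · exact Relation.ReflTransGen.head ⟨d, hdi, M.invol d w⟩ hw2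

lemma key (M : Maniplex n V) (hW : M.WPIP) (T : Finset (Fin n)) :
    ∀ (b : ℕ) (u v : V),
      M.ReachIn {c | b ≤ (c : ℕ)} u v →
      (∀ t ∈ T, b ≤ (t : ℕ) ∧ M.ReachIn {c | c ≠ t} u v) →
      M.ReachIn {c | b ≤ (c : ℕ) ∧ c ∉ T} u v := by
  induction T using Finset.strongInduction with
  | _ T ih =>
  intro b u v hamb hT
  rcases T.eq_empty_or_nonempty with rfl | hne
  · refine M.reachIn_mono (fun c hc => ?_) hamb
    exact ⟨hc, Finset.notMem_empty c⟩
  set i := T.min' hne with hidef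
  have hiT : i ∈ T := T.min'_mem hne
  obtain ⟨hbi, hvi⟩ := hT i hiT
  obtain ⟨w, h1, h2⟩ := M.reachIn_split i hvi
  have hamb' : M.ReachIn {c | b ≤ (c : ℕ)} u w :=
    M.reachIn_trans hamb (M.reachIn_symm
      (M.reachIn_mono (fun c (hc : i < c) => by
        have : (i : ℕ) < (c : ℕ) := hc
        show b ≤ (c : ℕ); omega) h2))
  have h1' : M.ReachIn {c | b ≤ (c : ℕ) ∧ c < i} u w := by
    rcases Nat.eq_zero_or_pos b with hb | hb
    · refine M.reachIn_mono (fun c hc => ?_) h1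
      exact ⟨by omega, hc⟩
    · have hbn : b - 1 < n := by have := i.isLt; omega
      have hlt : (⟨b - 1, hbn⟩ : Fin n) < i := by
        show b - 1 < (i : ℕ); omega
      have := hW ⟨b - 1, hbn⟩ i hlt u w
        (M.reachIn_mono (fun c (hc : b ≤ (c : ℕ)) => by
          show b - 1 < (c : ℕ); omega) hamb') h1
      exact M.reachIn_mono (fun c hc => by
        obtain ⟨hc1, hc2⟩ := hc
        have : b - 1 < (c : ℕ) := hc1
        exact ⟨by omega, hc2⟩) this
  have h2' : M.ReachIn {c | (i : ℕ) + 1 ≤ (c : ℕ) ∧ c ∉ T.erase i} w v := by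
    refine ih (T.erase i) (Finset.erase_ssubset hiT) ((i : ℕ) + 1) w v
      (M.reachIn_mono (fun c (hc : i < c) => by
        have : (i : ℕ) < (c : ℕ) := hc
        show (i : ℕ) + 1 ≤ (c : ℕ); omega) h2) ?_
    intro t ht
    have htT : t ∈ T := Finset.mem_of_mem_erase ht
    have hti : t ≠ i := Finset.ne_of_mem_erase ht
    have hit : (i : ℕ) < (t : ℕ) := by
      have hle : (i : ℕ) ≤ (t : ℕ) := T.min'_le t htT
      rcases lt_or_eq_of_le hle with h | h
      · exact h
      · exact absurd (Fin.ext h.symm) hti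
    refine ⟨by omega, M.reachIn_trans (M.reachIn_symm
      (M.reachIn_mono (fun c hc => ?_) h1')) (hT t htT).2⟩
    obtain ⟨_, hc2⟩ := hc
    have : (c : ℕ) < (i : ℕ) := hc2
    show c ≠ t
    intro hct
    rw [hct] at this
    omega
  refine M.reachIn_trans (M.reachIn_mono ?_ h1') (M.reachIn_mono ?_ h2')
  · intro c hc
    obtain ⟨hc1, hc2⟩ := hc
    refine ⟨hc1, fun hcT => ?_⟩
    have : (i : ℕ) ≤ (c : ℕ) := T.min'_le c hcT
    have : (c : ℕ) < (i : ℕ) := hc2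
    omega
  · intro c hc
    obtain ⟨hc1, hc2⟩ := hc
    refine ⟨by omega, fun hcT => ?_⟩
    exact hc2 (Finset.mem_erase.mpr ⟨by
      intro hci; rw [hci] at hc1; omega, hcT⟩)

end Maniplex

/-- A maniplex satisfies the component intersection property if and only if it
satisfies the weak path intersection property. -/
theorem cip_iff_wpip {n : ℕ} {V : Type} (M : Maniplex n V) :
    M.CIP ↔ M.WPIP := by
  constructor
  · -- CIP → WPIP
    intro hC i j hij u v hgt hlt
    have hij' : (i : ℕ) < (j : ℕ) := hij
    set r : Fin n → Fin n := fun a => if i < a ∧ a < j then i else a with hr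
    have hv : ∀ a, M.ReachIn {c | c ≠ r a} u v := by
      intro a
      by_cases h : i < a ∧ a < j
      · have hra : r a = i := by simp [hr, h]
        rw [hra]
        exact M.reachIn_mono (fun c (hc : i < c) => by
          have : (i : ℕ) < (c : ℕ) := hc
          show c ≠ i
          intro hci; rw [hci] at this; omega) hgt
      · have hra : r a = a := by simp [hr, h]
        rw [hra]
        rcases not_and_or.mp h with h' | h'
        · have hai : (a : ℕ) ≤ (i : ℕ) := by
            have := not_lt.mp h'; exact this
          exact M.reachIn_mono (fun c (hc : i < c) => by
            have : (i : ℕ) < (c : ℕ) := hc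
            show c ≠ a
            intro hca; rw [hca] at this; omega) hgt
        · have hja : (j : ℕ) ≤ (a : ℕ) := by
            have := not_lt.mp h'; exact this
          exact M.reachIn_mono (fun c (hc : c < j) => by
            have : (c : ℕ) < (j : ℕ) := hc
            show c ≠ a
            intro hca; rw [hca] at this; omega) hlt
    have h := hC n r (fun a => M.face (r a) u) (fun a => ⟨u, rfl⟩)
      (fun a b => ⟨u, Relation.ReflTransGen.refl, Relation.ReflTransGen.refl⟩)
      u v (fun a => Relation.ReflTransGen.refl) (fun a => hv a)
    refine M.reachIn_mono ?_ h
    intro c hc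
    have hcc := hc c
    by_cases h' : i < c ∧ c < j
    · exact h'
    · exfalso
      have : r c = c := by simp [hr, h']
      rw [this] at hcc
      exact hcc rfl
  · -- WPIP → CIP
    intro hW k r S hF hInt u v hu hv
    have hTv : ∀ a, M.ReachIn {c | c ≠ r a} u v := by
      intro a
      obtain ⟨w, hw⟩ := hF a
      have h1 : M.ReachIn {c | c ≠ r a} w u := by
        have := hu a; rw [hw] at this; exact this
      have h2 : M.ReachIn {c | c ≠ r a} w v := by
        have := hv a; rw [hw] at this; exact this
      exact M.reachIn_trans (M.reachIn_symm h1) h2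
    have hamb : M.ReachIn {c | 0 ≤ (c : ℕ)} u v :=
      Relation.ReflTransGen.mono (fun x y ⟨i, hs⟩ => ⟨i, Nat.zero_le _, hs⟩)
        _ _ (M.conn u v)
    have hk := M.key hW (Finset.image r Finset.univ) 0 u v hamb ?_
    · refine M.reachIn_mono ?_ hk
      intro c hc a
      intro hca
      exact hc.2 (Finset.mem_image.mpr ⟨a, Finset.mem_univ a, hca.symm⟩)
    · intro t ht
      obtain ⟨a, _, hat⟩ := Finset.mem_image.mp ht
      refine ⟨Nat.zero_le _, ?_⟩
      rw [← hat]
      exact hTv a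
end
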